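/- If T is a strong starter of order p, then the triplication table Σ_p contains at most two pairs with sum 0 mod p. -/
import Mathlib


/-- `a`, `b` list the first/second elements of the pairs of a pairing in `ZMod n`.
`IsStarter n a b` says: the pairs partition `ZMod n \ {0}` (all entries distinct,
and the entries cover exactly the nonzero elements), and the differences
`±(a i - b i)` are all distinct and cover `ZMod n \ {0}`. -/
def IsStarter (n : ℕ) {ι : Type} (a b : ι → ZMod n) : Prop :=
  Function.Injective (fun z : ι × Bool => if z.2 then a z.1 else b z.1) ∧
  Set.range a ∪ Set.range b = {x : ZMod n | x ≠ 0} ∧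
  Function.Injective (fun z : ι × Bool => if z.2 then a z.1 - b z.1 else b z.1 - a z.1) ∧
  {d : ZMod n | ∃ i, d = a i - b i ∨ d = b i - a i} = {x : ZMod n | x ≠ 0}

/-- A strong starter: a starter whose pair sums `a i + b i` are all distinct and nonzero. -/
def IsStrongStarter (n : ℕ) {ι : Type} (a b : ι → ZMod n) : Prop :=
  IsStarter n a b ∧
  Function.Injective (fun i => a i + b i) ∧
  ∀ i, a i + b i ≠ 0

/-- The triplication table `Σ_p` (as a flat list of ordered pairs): the top pair `(t,t)`
followed, for each `i`, by the row `(x i, y i), (t + x i, t + y i), (t - y i, t - x i)`. -/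
def tripPairs {p q : ℕ} (x y : Fin q → ZMod p) (t : ZMod p) : List (ZMod p × ZMod p) :=
  (t, t) :: (List.finRange q).flatMap
    (fun i => [(x i, y i), (t + x i, t + y i), (t - y i, t - x i)])

/-- If `T` is a strong starter of order `p`, then the triplication table contains
at most two pairs with sum `0` mod `p`. -/
theorem trip_at_most_two_zero_sums (p q : ℕ) (hp : p = 2 * q + 1) (hodd : Odd p)
    (x y : Fin q → ZMod p) (hT : IsStrongStarter p x y) (t : ZMod p) :
    ((tripPairs x y t).filter (fun uv => uv.1 + uv.2 = 0)).length ≤ 2 := by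
  obtain ⟨-, hinj, hne⟩ := hT
  have key : ∀ c : ZMod p,
      (∑ i : Fin q, if x i + y i = c then 1 else 0) ≤ 1 := by
    intro c
    calc (∑ i : Fin q, if x i + y i = c then 1 else 0)
        = (Finset.univ.filter (fun i => x i + y i = c)).card := by
          rw [Finset.card_filter]
      _ ≤ 1 := Finset.card_le_one.mpr fun a ha b hb => by
          simp only [Finset.mem_filter] at ha hb
          exact hinj (ha.2.trans hb.2.symm)
  have hrow : ∀ i : Fin q,
      (List.filter (fun uv : ZMod p × ZMod p => decide (uv.1 + uv.2 = 0))
        [(x i, y i), (t + x i, t + y i), (t - y i, t - x i)]).length =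
      (if t + x i + (t + y i) = 0 then 1 else 0) +
      (if t - y i + (t - x i) = 0 then 1 else 0) := by
    intro i
    simp only [List.filter_cons, List.filter_nil, decide_eq_true_eq]
    rw [if_neg (hne i)]
    split_ifs <;> simp
  have hsum : ((List.finRange q).flatMap fun a =>
      List.filter (fun uv : ZMod p × ZMod p => decide (uv.1 + uv.2 = 0))
        [(x a, y a), (t + x a, t + y a), (t - y a, t - x a)]).length =
      ∑ i : Fin q, ((if t + x i + (t + y i) = 0 then 1 else 0) +
        (if t - y i + (t - x i) = 0 then 1 else 0)) := by
    rw [List.length_flatMap, Fin.sum_univ_def]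
    congr 1
    apply List.map_congr_left
    intro i _
    exact hrow i
  have hlen : ((tripPairs x y t).filter (fun uv => uv.1 + uv.2 = 0)).length =
      (if t + t = 0 then 1 else 0) +
      ∑ i : Fin q, ((if t + x i + (t + y i) = 0 then 1 else 0) +
        (if t - y i + (t - x i) = 0 then 1 else 0)) := by
    rw [tripPairs, List.filter_cons, List.filter_flatMap]
    by_cases h : t + t = 0
    · rw [if_pos (by simp [h]), if_pos h, List.length_cons, hsum]; omega
    · rw [if_neg (by simp [h]), if_neg h, hsum]; omega
  rw [hlen]
  by_cases h2t : t + t = 0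
  · have ht : t = 0 := by
      have hz : ((2 * q + 1 : ℕ) : ZMod p) = 0 := by rw [← hp]; exact ZMod.natCast_self p
      push_cast at hz
      have h1 : ((q : ZMod p) + 1) * (t + t) = t := by linear_combination t * hz
      rw [h2t, mul_zero] at h1
      exact h1.symm
    subst ht
    rw [if_pos h2t]
    have hzero : (∑ i : Fin q, ((if (0:ZMod p) + x i + (0 + y i) = 0 then 1 else 0) +
        (if (0:ZMod p) - y i + (0 - x i) = 0 then 1 else 0))) = 0 := by
      apply Finset.sum_eq_zero
      intro i _
      rw [if_neg (fun h => hne i (by linear_combination h)),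
        if_neg (fun h => hne i (by linear_combination -h))]
      rfl
    omega
  · rw [if_neg h2t, zero_add, Finset.sum_add_distrib]
    have h1 : (∑ i : Fin q, if t + x i + (t + y i) = 0 then 1 else 0) ≤ 1 := by
      calc (∑ i : Fin q, if t + x i + (t + y i) = 0 then 1 else 0)
          = (∑ i : Fin q, if x i + y i = -(t+t) then 1 else 0) := by
            apply Finset.sum_congr rfl; intro i _
            simp only [show (t + x i + (t + y i) = 0) ↔ (x i + y i = -(t+t)) from
              ⟨fun h => by linear_combination h, fun h => by linear_combination h⟩]
        _ ≤ 1 := key _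
    have h2 : (∑ i : Fin q, if t - y i + (t - x i) = 0 then 1 else 0) ≤ 1 := by
      calc (∑ i : Fin q, if t - y i + (t - x i) = 0 then 1 else 0)
          = (∑ i : Fin q, if x i + y i = t+t then 1 else 0) := by
            apply Finset.sum_congr rfl; intro i _
            simp only [show (t - y i + (t - x i) = 0) ↔ (x i + y i = t+t) from
              ⟨fun h => by linear_combination -h, fun h => by linear_combination -h⟩]
        _ ≤ 1 := key _
    omega
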